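/- Let 0 < p < 2, μ > 0, and let X, Y ∈ ℝ^{m×n} be arbitrary real matrices. Then Tr((YᵀY + μ²I)^{p/2}) − Tr((XᵀX + μ²I)^{p/2}) ≥ (p/2) · Tr((YᵀY − XᵀX)(YᵀY + μ²I)^{p/2 − 1}), where I is the n×n identity matrix. -/

import Mathlib

open Matrix

lemma conj_trace' {n : ℕ} {V : Matrix (Fin n) (Fin n) ℝ} (hV : star V * V = 1) (d : Fin n → ℝ) :
    (V * Matrix.diagonal d * star V).trace = ∑ i, d i := by
  rw [Matrix.trace_mul_cycle, hV, Matrix.one_mul, Matrix.trace_diagonal]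

lemma tr4' {n : ℕ} (U V : Matrix (Fin n) (Fin n) ℝ) (d e : Fin n → ℝ) :
    ((U * Matrix.diagonal d * star U) * (V * Matrix.diagonal e * star V)).trace
      = ∑ i, ∑ j, d i * e j * ((star U * V) i j)^2 := by
  have h1 : (U * Matrix.diagonal d * star U) * (V * Matrix.diagonal e * star V)
      = U * (Matrix.diagonal d * (star U * V) * Matrix.diagonal e) * star V := by
    simp only [Matrix.mul_assoc]
  rw [h1, Matrix.trace_mul_cycle]
  have h2 : star V * U = star (star U * V) := by rw [Matrix.star_mul, star_star]
  rw [h2]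
  set W := star U * V with hW
  rw [Matrix.trace]
  simp only [Matrix.diag, Matrix.mul_apply, Matrix.diagonal_apply, Matrix.star_apply, star_trivial,
    ite_mul, mul_ite, zero_mul, mul_zero, Finset.sum_ite_eq, Finset.sum_ite_eq',
    Finset.mem_univ, if_true]
  rw [Finset.sum_comm]
  refine Finset.sum_congr rfl fun i _ => Finset.sum_congr rfl fun j _ => by ring

lemma klein_scalar' {q a b : ℝ} (hq0 : 0 < q) (hq1 : q ≤ 1) (ha : 0 < a) (hb : 0 < b) :
    a ^ q ≤ b ^ q + q * b ^ (q - 1) * (a - b) := by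
  have hab : 0 < a / b := div_pos ha hb
  have hs : (-1 : ℝ) ≤ a / b - 1 := by linarith
  have h := rpow_one_add_le_one_add_mul_self hs hq0.le hq1
  rw [show (1 : ℝ) + (a / b - 1) = a / b by ring, Real.div_rpow ha.le hb.le] at h
  have hbq : (0 : ℝ) < b ^ q := Real.rpow_pos_of_pos hb q
  have h2 : a ^ q ≤ b ^ q * (1 + q * (a / b - 1)) := by
    have h3 := mul_le_mul_of_nonneg_left h hbq.le
    rwa [mul_div_cancel₀ _ hbq.ne'] at h3
  rw [Real.rpow_sub_one hb.ne']
  calc a ^ q ≤ b ^ q * (1 + q * (a / b - 1)) := h2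
    _ = b ^ q + q * (b ^ q / b) * (a - b) := by field_simp

lemma klein_matrix' {n : ℕ} {A B : Matrix (Fin n) (Fin n) ℝ} (hA : A.PosDef) (hB : B.PosDef)
    {q : ℝ} (hq0 : 0 < q) (hq1 : q < 1) :
    q * ((B - A) * hB.1.cfc (fun x : ℝ => x ^ (q - 1))).trace
      ≤ (hB.1.cfc (fun x : ℝ => x ^ q)).trace - (hA.1.cfc (fun x : ℝ => x ^ q)).trace := by
  set U := (Matrix.IsHermitian.eigenvectorUnitary hA.1 : Matrix (Fin n) (Fin n) ℝ) with hUdef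
  set V := (Matrix.IsHermitian.eigenvectorUnitary hB.1 : Matrix (Fin n) (Fin n) ℝ) with hVdef
  set lam := hA.1.eigenvalues with hlamdef
  set nu := hB.1.eigenvalues with hnudef
  have hU : star U * U = 1 := Unitary.coe_star_mul_self _
  have hUU : U * star U = 1 := Unitary.coe_mul_star_self _
  have hV : star V * V = 1 := Unitary.coe_star_mul_self _
  have hVV : V * star V = 1 := Unitary.coe_mul_star_self _
  have cfcA : ∀ f : ℝ → ℝ, hA.1.cfc f = U * Matrix.diagonal (fun i => f (lam i)) * star U := by
    intro f
    rw [Matrix.IsHermitian.cfc]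
    simp [RCLike.ofReal_real_eq_id, Function.comp_def]
    rfl
  have cfcB : ∀ f : ℝ → ℝ, hB.1.cfc f = V * Matrix.diagonal (fun i => f (nu i)) * star V := by
    intro f
    rw [Matrix.IsHermitian.cfc]
    simp [RCLike.ofReal_real_eq_id, Function.comp_def]
    rfl
  have specA : A = U * Matrix.diagonal (fun i => lam i) * star U := by
    conv_lhs => rw [hA.1.spectral_theorem]
    simp [RCLike.ofReal_real_eq_id, Function.comp_def]
    rfl
  have specB : B = V * Matrix.diagonal (fun i => nu i) * star V := by
    conv_lhs => rw [hB.1.spectral_theorem]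
    simp [RCLike.ofReal_real_eq_id, Function.comp_def]
    rfl
  set W := star U * V with hWdef
  have hWW : W * star W = 1 := by
    rw [hWdef, Matrix.star_mul, star_star]
    calc star U * V * (star V * U) = star U * (V * star V) * U := by simp only [Matrix.mul_assoc]
      _ = 1 := by rw [hVV, Matrix.mul_one, hU]
  have hWW' : star W * W = 1 := by
    rw [hWdef, Matrix.star_mul, star_star]
    calc star V * U * (star U * V) = star V * (U * star U) * V := by simp only [Matrix.mul_assoc]
      _ = 1 := by rw [hUU, Matrix.mul_one, hV]
  have hrow : ∀ i, ∑ j, (W i j) ^ 2 = 1 := by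
    intro i
    have h := Matrix.ext_iff.mpr hWW i i
    simp only [Matrix.mul_apply, Matrix.star_apply, star_trivial, Matrix.one_apply_eq] at h
    rw [← h]
    exact Finset.sum_congr rfl fun j _ => by ring
  have hcol : ∀ j, ∑ i, (W i j) ^ 2 = 1 := by
    intro j
    have h := Matrix.ext_iff.mpr hWW' j j
    simp only [Matrix.mul_apply, Matrix.star_apply, star_trivial, Matrix.one_apply_eq] at h
    rw [← h]
    exact Finset.sum_congr rfl fun i _ => by ring
  -- traces
  have t1 : (hA.1.cfc fun x : ℝ => x ^ q).trace = ∑ i, lam i ^ q := by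
    rw [cfcA]; exact conj_trace' hU _
  have t2 : (hB.1.cfc fun x : ℝ => x ^ q).trace = ∑ j, nu j ^ q := by
    rw [cfcB]; exact conj_trace' hV _
  have t3 : (B * hB.1.cfc fun x : ℝ => x ^ (q - 1)).trace = ∑ j, nu j * nu j ^ (q - 1) := by
    have hmul : B * (hB.1.cfc fun x : ℝ => x ^ (q - 1))
        = V * Matrix.diagonal (fun j => nu j * nu j ^ (q - 1)) * star V := by
      rw [cfcB, specB]
      calc V * Matrix.diagonal (fun i => nu i) * star V *
            (V * Matrix.diagonal (fun i => nu i ^ (q - 1)) * star V)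
          = V * (Matrix.diagonal (fun i => nu i) *
              ((star V * V) * (Matrix.diagonal (fun i => nu i ^ (q - 1)) * star V))) := by
            simp only [Matrix.mul_assoc]
        _ = V * Matrix.diagonal (fun j => nu j * nu j ^ (q - 1)) * star V := by
            rw [hV, Matrix.one_mul]
            simp only [← Matrix.mul_assoc]
            rw [Matrix.mul_assoc V, Matrix.diagonal_mul_diagonal]
    rw [hmul]; exact conj_trace' hV _
  have t4 : (A * hB.1.cfc fun x : ℝ => x ^ (q - 1)).trace
      = ∑ i, ∑ j, lam i * nu j ^ (q - 1) * (W i j) ^ 2 := by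
    rw [cfcB, specA]; exact tr4' U V _ _
  rw [Matrix.sub_mul, Matrix.trace_sub, t1, t2, t3, t4]
  -- rewrite single sums as doubly-weighted sums
  have e1 : ∑ j, nu j * nu j ^ (q - 1) = ∑ i, ∑ j, (W i j) ^ 2 * (nu j * nu j ^ (q - 1)) := by
    rw [Finset.sum_comm]
    refine Finset.sum_congr rfl fun j _ => ?_
    rw [← Finset.sum_mul, hcol j, one_mul]
  have e2 : ∑ j, nu j ^ q = ∑ i, ∑ j, (W i j) ^ 2 * nu j ^ q := by
    rw [Finset.sum_comm]
    refine Finset.sum_congr rfl fun j _ => ?_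
    rw [← Finset.sum_mul, hcol j, one_mul]
  have e3 : ∑ i, lam i ^ q = ∑ i, ∑ j, (W i j) ^ 2 * lam i ^ q := by
    refine Finset.sum_congr rfl fun i _ => ?_
    rw [← Finset.sum_mul, hrow i, one_mul]
  rw [e1, e2, e3, ← Finset.sum_sub_distrib, ← Finset.sum_sub_distrib, Finset.mul_sum]
  refine Finset.sum_le_sum fun i _ => ?_
  rw [← Finset.sum_sub_distrib, ← Finset.sum_sub_distrib, Finset.mul_sum]
  refine Finset.sum_le_sum fun j _ => ?_
  have hc : (0 : ℝ) ≤ (W i j) ^ 2 := sq_nonneg _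
  have hk := mul_le_mul_of_nonneg_left
    (klein_scalar' hq0 hq1.le (hA.eigenvalues_pos i) (hB.eigenvalues_pos j)) hc
  nlinarith [hk]

/-- Real power of a real symmetric matrix, defined through the spectral decomposition
`A = U · diag(λ₁,…,λₙ) · Uᵀ` as `A^r = U · diag(λ₁^r,…,λₙ^r) · Uᵀ`
(junk value `0` if `A` is not symmetric). -/
noncomputable def mpow {n : ℕ} (A : Matrix (Fin n) (Fin n) ℝ) (r : ℝ) :
    Matrix (Fin n) (Fin n) ℝ :=
  if hA : A.IsHermitian then hA.cfc (fun x : ℝ => x ^ r) else 0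

/-- Inequality (19): for `0 < p < 2`, `μ > 0` and arbitrary real matrices `X, Y ∈ ℝ^{m×n}`,
`Tr((YᵀY + μ²I)^{p/2}) − Tr((XᵀX + μ²I)^{p/2}) ≥ (p/2)·Tr((YᵀY − XᵀX)(YᵀY + μ²I)^{p/2−1})`. -/
theorem stmt_6 {m n : ℕ} (p μ : ℝ) (hp0 : 0 < p) (hp2 : p < 2) (hμ : 0 < μ)
    (X Y : Matrix (Fin m) (Fin n) ℝ) :
    p / 2 * ((Yᵀ * Y - Xᵀ * X) *
        mpow (Yᵀ * Y + μ ^ 2 • (1 : Matrix (Fin n) (Fin n) ℝ)) (p / 2 - 1)).trace ≤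
      (mpow (Yᵀ * Y + μ ^ 2 • (1 : Matrix (Fin n) (Fin n) ℝ)) (p / 2)).trace -
        (mpow (Xᵀ * X + μ ^ 2 • (1 : Matrix (Fin n) (Fin n) ℝ)) (p / 2)).trace := by
  have hI : (μ ^ 2 • (1 : Matrix (Fin n) (Fin n) ℝ)).PosDef := by
    rw [Matrix.smul_one_eq_diagonal]
    exact Matrix.PosDef.diagonal (fun i => by positivity)
  have hX : (Xᵀ * X).PosSemidef := by
    simpa [Matrix.conjTranspose_eq_transpose_of_trivial] using
      Matrix.posSemidef_conjTranspose_mul_self X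
  have hY : (Yᵀ * Y).PosSemidef := by
    simpa [Matrix.conjTranspose_eq_transpose_of_trivial] using
      Matrix.posSemidef_conjTranspose_mul_self Y
  have hA : (Xᵀ * X + μ ^ 2 • (1 : Matrix (Fin n) (Fin n) ℝ)).PosDef :=
    Matrix.PosDef.posSemidef_add hX hI
  have hB : (Yᵀ * Y + μ ^ 2 • (1 : Matrix (Fin n) (Fin n) ℝ)).PosDef :=
    Matrix.PosDef.posSemidef_add hY hI
  have hq0 : (0 : ℝ) < p / 2 := by linarith
  have hq1 : p / 2 < 1 := by linarith
  have hsub : Yᵀ * Y - Xᵀ * X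
      = (Yᵀ * Y + μ ^ 2 • (1 : Matrix (Fin n) (Fin n) ℝ))
        - (Xᵀ * X + μ ^ 2 • (1 : Matrix (Fin n) (Fin n) ℝ)) :=
    (add_sub_add_right_eq_sub _ _ _).symm
  rw [hsub]
  simp only [mpow]
  rw [dif_pos hB.1, dif_pos hB.1, dif_pos hA.1]
  exact klein_matrix' hA hB hq0 hq1
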